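/- Let n ≥ 5 be odd. There exists a nonzero constant a_n, depending only on n, such that for every r > 0 and every λ ∈ ℝ with λ ≠ 0 one has (1/λ) ∂_λ g_n(λ, r) = a_n · g_{n-2}(λ, r). (This 'dimension reduction' identity expresses that applying (1/λ)d/dλ to the n-dimensional free resolvent kernel yields a constant multiple of the (n−2)-dimensional one.) -/

import Mathlib

open MeasureTheory Complex Real Finset


noncomputable def Bc (m l : ℕ) : ℂ :=
  ((2*m - l).factorial : ℂ) / ((l.factorial : ℂ) * ((m - l).factorial : ℂ))

noncomputable def Bc' (m k : ℕ) : ℂ :=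
  ((2*m - 2 - k).factorial : ℂ) / ((k.factorial : ℂ) * ((m - 1 - k).factorial : ℂ))

lemma aux_field (x y F J P : ℂ) (hx1 : x+1 ≠ 0) (hx2 : x+2 ≠ 0) (hy : y+1 ≠ 0)
    (hJ : J ≠ 0) (hP : P ≠ 0) :
    ((x+2+2*y+1)*F)/(((x+1)*J)*((y+1)*P)) - 2*(x+2)*(F/((((x+2)*((x+1)*J)))*P)) =
      F/(J*((y+1)*P)) := by
  have hb : ((x+1)*J)*((y+1)*P) ≠ 0 := by
    exact mul_ne_zero (mul_ne_zero hx1 hJ) (mul_ne_zero hy hP)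
  have hd : (((x+2)*((x+1)*J)))*P ≠ 0 := by
    exact mul_ne_zero (mul_ne_zero hx2 (mul_ne_zero hx1 hJ)) hP
  have he : J*((y+1)*P) ≠ 0 := mul_ne_zero hJ (mul_ne_zero hy hP)
  rw [mul_div_assoc', div_sub_div _ _ hb hd,
    div_eq_div_iff (mul_ne_zero hb hd) he]
  ring

lemma Bident (m j : ℕ) (h : j + 2 ≤ m) :
    Bc m (j+1) - 2*(j+2) * Bc m (j+2) = Bc' m j := by
  obtain ⟨p, rfl⟩ : ∃ p, m = j + 2 + p := ⟨m - (j+2), by omega⟩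
  have e1 : 2*(j+2+p) - (j+1) = (j+2+2*p) + 1 := by omega
  have e2 : 2*(j+2+p) - (j+2) = j+2+2*p := by omega
  have e3 : (j+2+p) - (j+1) = p + 1 := by omega
  have e4 : (j+2+p) - (j+2) = p := by omega
  have e5 : 2*(j+2+p) - 2 - j = j+2+2*p := by omega
  have e6 : (j+2+p) - 1 - j = p + 1 := by omega
  unfold Bc Bc'
  rw [e1, e2, e3, e4, e5, e6]
  have hF : ((j+2+2*p).factorial : ℂ) ≠ 0 := Nat.cast_ne_zero.2 (Nat.factorial_ne_zero _)
  have hj : ((j).factorial : ℂ) ≠ 0 := Nat.cast_ne_zero.2 (Nat.factorial_ne_zero _)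
  have hp : ((p).factorial : ℂ) ≠ 0 := Nat.cast_ne_zero.2 (Nat.factorial_ne_zero _)
  have h1 : ((j:ℂ)+1) ≠ 0 := by
    have := (Nat.cast_ne_zero (R := ℂ)).2 (by omega : j+1 ≠ 0); push_cast at this; exact this
  have h2 : ((j:ℂ)+2) ≠ 0 := by
    have := (Nat.cast_ne_zero (R := ℂ)).2 (by omega : j+2 ≠ 0); push_cast at this; exact this
  have h3 : ((p:ℂ)+1) ≠ 0 := by
    have := (Nat.cast_ne_zero (R := ℂ)).2 (by omega : p+1 ≠ 0); push_cast at this; exact this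
  rw [Nat.factorial_succ (j+2+2*p), Nat.factorial_succ (j+1), Nat.factorial_succ j,
    Nat.factorial_succ p]
  have := aux_field (j : ℂ) (p : ℂ) ((j+2+2*p).factorial : ℂ) ((j).factorial : ℂ)
    ((p).factorial : ℂ) h1 h2 h3 hj hp
  push_cast at this ⊢
  convert this using 2 <;> ring

lemma Bc_top (m : ℕ) : Bc m m = 1 := by
  unfold Bc
  have e1 : 2*m - m = m := by omega
  have e2 : m - m = 0 := by omega
  rw [e1, e2]
  simp [Nat.factorial_ne_zero, div_self, Nat.cast_ne_zero]

lemma Bc'_top (m : ℕ) (hm : 1 ≤ m) : Bc' m (m-1) = 1 := by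
  unfold Bc'
  have e1 : 2*m - 2 - (m-1) = m - 1 := by omega
  have e2 : m - 1 - (m-1) = 0 := by omega
  rw [e1, e2]
  simp [Nat.factorial_ne_zero, div_self, Nat.cast_ne_zero]

lemma Bc_zero (m : ℕ) (hm : 1 ≤ m) : Bc m 0 = 2 * Bc m 1 := by
  obtain ⟨m', rfl⟩ : ∃ m', m = m'+1 := ⟨m-1, by omega⟩
  unfold Bc
  have e1 : 2*(m'+1) - 0 = (2*m'+1)+1 := by omega
  have e2 : 2*(m'+1) - 1 = 2*m'+1 := by omega
  have e3 : (m'+1) - 0 = m'+1 := by omega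
  have e4 : (m'+1) - 1 = m' := by omega
  rw [e1, e2, e3, e4, Nat.factorial_succ (2*m'+1), Nat.factorial_succ m']
  have hm' : ((m' : ℕ).factorial : ℂ) ≠ 0 := Nat.cast_ne_zero.2 (Nat.factorial_ne_zero _)
  have h1 : ((m':ℂ)+1) ≠ 0 := by
    have := (Nat.cast_ne_zero (R := ℂ)).2 (by omega : m'+1 ≠ 0); push_cast at this; exact this
  simp only [Nat.factorial_zero, Nat.factorial_one, Nat.cast_one, one_mul]
  push_cast
  rw [mul_div_assoc', div_eq_div_iff (mul_ne_zero h1 hm') hm']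
  ring

lemma key_sum (M : ℕ) (r lam c : ℂ) (hc : c = (-2)*Complex.I*r) :
    Complex.I * r * ∑ l ∈ Finset.range (M+2), Bc (M+1) l * c^l * lam^l
      + ∑ l ∈ Finset.range (M+2), Bc (M+1) l * c^l * ((l:ℂ) * lam^(l-1))
    = lam * ∑ k ∈ Finset.range (M+1), 2*r^2 * Bc' (M+1) k * c^k * lam^k := by
  have hc1 : Complex.I*r*c = 2*r^2 := by
    rw [hc]; linear_combination (-2*r^2) * Complex.I_sq
  have hc2 : c^2 = -4*r^2 := by
    rw [hc]; linear_combination (4*r^2) * Complex.I_sq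
  rw [Finset.mul_sum, Finset.mul_sum]
  rw [Finset.sum_range_succ' (fun l => Complex.I*r*(Bc (M+1) l * c^l * lam^l)) (M+1)]
  rw [Finset.sum_range_succ' (fun l => Bc (M+1) l * c^l * ((l:ℂ) * lam^(l-1))) (M+1)]
  simp only [pow_zero, mul_one, Nat.cast_zero, zero_mul, mul_zero, add_zero,
    Nat.add_sub_cancel, Nat.cast_add, Nat.cast_one]
  rw [Finset.sum_range_succ (fun i => Complex.I*r*(Bc (M+1) (i+1) * c^(i+1) * lam^(i+1))) M]
  rw [Finset.sum_range_succ' (fun i => Bc (M+1) (i+1) * c^(i+1) * (((i:ℂ)+1) * lam^i)) M]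
  rw [Finset.sum_range_succ (fun k => lam * (2*r^2 * Bc' (M+1) k * c^k * lam^k)) M]
  have hsum : (∑ i ∈ Finset.range M, Complex.I*r*(Bc (M+1) (i+1) * c^(i+1) * lam^(i+1)))
      + (∑ i ∈ Finset.range M, Bc (M+1) (i+1+1) * c^(i+1+1) * ((((i+1:ℕ):ℂ)+1) * lam^(i+1)))
      = ∑ k ∈ Finset.range M, lam * (2*r^2 * Bc' (M+1) k * c^k * lam^k) := by
    rw [← Finset.sum_add_distrib]
    refine Finset.sum_congr rfl (fun i hi => ?_)
    have hij : i + 2 ≤ M + 1 := by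
      have := Finset.mem_range.1 hi; omega
    have hB := Bident (M+1) i hij
    push_cast at hB ⊢
    linear_combination (2*r^2*c^i*lam^(i+1)) * hB
      + (Bc (M+1) (i+1)*c^i*lam^(i+1)) * hc1
      + (((i:ℂ)+2)*Bc (M+1) (i+2)*c^i*lam^(i+1)) * hc2
  have htop : Complex.I*r*(Bc (M+1) (M+1) * c^(M+1) * lam^(M+1))
      = lam * (2*r^2 * Bc' (M+1) M * c^M * lam^M) := by
    have h1 : Bc (M+1) (M+1) = 1 := Bc_top (M+1)
    have h2 : Bc' (M+1) M = 1 := by simpa using Bc'_top (M+1) (by omega)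
    rw [h1, h2]
    linear_combination (c^M*lam^(M+1)) * hc1
  have hedge : Complex.I*r*(Bc (M+1) 0 * 1 * 1)
      + Bc (M+1) (0+1) * c^(0+1) * (((0:ℂ)+1) * lam^0) = 0 := by
    have h0 := Bc_zero (M+1) (by omega)
    rw [hc]
    rw [hc] at hc1
    linear_combination (Complex.I*r) * h0 + Bc (M+1) 1 * hc1 + (2*r^2*Bc (M+1) 1) * Complex.I_sq
  linear_combination hsum + htop + hedge

lemma final_alg (lam C5 C3 e Q R2 r2 : ℂ) (hlam : lam ≠ 0) (hC3 : C3 ≠ 0)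
    (hR : R2 ≠ 0) (hr2 : r2 ≠ 0) :
    1/lam * (C5/(R2*r2) * (e * (lam * (2*r2*Q)))) = 2*C5/C3 * (C3/R2 * (e*Q)) := by
  field_simp


/-- The Green's function constant `c₀(n) = Γ(n/2 − 1)/(4 π^{n/2})`. -/
noncomputable def green0 (n : ℕ) : ℝ :=
  Real.Gamma ((n : ℝ) / 2 - 1) / (4 * Real.pi ^ ((n : ℝ) / 2))

/-- The constant `C_n = c₀(n) · ((n−3)/2)!/(n−3)!`. -/
noncomputable def resC (n : ℕ) : ℝ :=
  green0 n * (Nat.factorial ((n - 3) / 2)) / (Nat.factorial (n - 3))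

/-- The kernel `g_n(λ, r)` of the limiting free resolvent `(−Δ − λ² − i0)^{−1}` on `ℝ^n`
for odd `n ≥ 3`. -/
noncomputable def gker (n : ℕ) (lam r : ℝ) : ℂ :=
  (resC n : ℂ) * Complex.exp (Complex.I * (lam : ℂ) * (r : ℂ)) / (r : ℂ) ^ (n - 2) *
    ∑ l ∈ Finset.range ((n - 3) / 2 + 1),
      ((Nat.factorial (n - 3 - l) : ℂ) /
          ((Nat.factorial l : ℂ) * (Nat.factorial ((n - 3) / 2 - l) : ℂ))) *
        ((-2) * Complex.I * (r : ℂ) * (lam : ℂ)) ^ l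

lemma resC_pos (n : ℕ) (hn : 3 ≤ n) : 0 < resC n := by
  unfold resC green0
  have hg : 0 < Real.Gamma ((n:ℝ)/2 - 1) := by
    apply Real.Gamma_pos_of_pos
    have : (3:ℝ) ≤ (n:ℝ) := by exact_mod_cast hn
    linarith
  have hp : (0:ℝ) < Real.pi ^ ((n:ℝ)/2) := Real.rpow_pos_of_pos Real.pi_pos _
  have h1 : (0:ℝ) < (Nat.factorial ((n-3)/2) : ℝ) := by exact_mod_cast Nat.factorial_pos _
  have h2 : (0:ℝ) < (Nat.factorial (n-3) : ℝ) := by exact_mod_cast Nat.factorial_pos _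
  exact div_pos (mul_pos (div_pos hg (by positivity)) h1) h2


/-- Dimension reduction identity: `(1/λ) ∂_λ g_n(λ, r) = a_n · g_{n−2}(λ, r)` for some
nonzero constant `a_n` depending only on `n`. -/
theorem dimension_reduction (n : ℕ) (hn : 5 ≤ n) (hodd : Odd n) :
    ∃ a : ℝ, a ≠ 0 ∧ ∀ r : ℝ, 0 < r → ∀ lam : ℝ, lam ≠ 0 →
      (1 / (lam : ℂ)) * deriv (fun t : ℝ => gker n t r) lam =
        (a : ℂ) * gker (n - 2) lam r := by
  obtain ⟨M, rfl⟩ : ∃ M, n = 2*M+5 := by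
    obtain ⟨k, hk⟩ := hodd; exact ⟨k - 2, by omega⟩
  have hCpos : 0 < resC (2*M+5) := resC_pos _ (by omega)
  have hC'pos : 0 < resC (2*M+5-2) := resC_pos _ (by omega)
  refine ⟨2 * resC (2*M+5) / resC (2*M+5-2), by positivity, ?_⟩
  intro r hr0 lam hl
  have hr : (r:ℂ) ≠ 0 := Complex.ofReal_ne_zero.2 (ne_of_gt hr0)
  have hlam : (lam:ℂ) ≠ 0 := Complex.ofReal_ne_zero.2 hl
  have hC' : (resC (2*M+5-2) : ℂ) ≠ 0 := by
    exact_mod_cast Complex.ofReal_ne_zero.2 (ne_of_gt hC'pos)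
  set c : ℂ := (-2) * Complex.I * (r:ℂ) with hc
  set A : ℂ := (resC (2*M+5) : ℂ) / (r:ℂ)^(2*M+3) with hA
  set P : ℂ → ℂ := fun z => ∑ l ∈ Finset.range (M+2), Bc (M+1) l * c^l * z^l with hP
  set Q : ℂ → ℂ := fun z => ∑ k ∈ Finset.range (M+1), Bc' (M+1) k * c^k * z^k with hQ
  set S' : ℂ := ∑ l ∈ Finset.range (M+2), Bc (M+1) l * c^l * ((l:ℂ) * (lam:ℂ)^(l-1))
    with hS'
  -- rewrite gker n
  have hgker : ∀ t : ℝ, gker (2*M+5) t r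
      = A * (Complex.exp (Complex.I * (t:ℂ) * (r:ℂ)) * P t) := by
    intro t
    unfold gker
    have e1 : 2*M+5-3 = 2*(M+1) := by omega
    have e2 : (2*(M+1))/2 = M+1 := by omega
    have e3 : 2*M+5-2 = 2*M+3 := by omega
    rw [e1, e2, e3]
    rw [hA, hP]
    have hsum : ∑ l ∈ Finset.range (M+1+1),
        ((Nat.factorial (2*(M+1) - l) : ℂ) /
          ((Nat.factorial l : ℂ) * (Nat.factorial (M+1 - l) : ℂ))) *
          ((-2) * Complex.I * (r:ℂ) * (t:ℂ)) ^ l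
        = ∑ l ∈ Finset.range (M+2), Bc (M+1) l * c^l * (t:ℂ)^l := by
      refine Finset.sum_congr (by norm_num) (fun l hl => ?_)
      unfold Bc
      rw [hc, mul_pow]
      ring
    rw [hsum]
    ring
  -- rewrite gker (n-2)
  have hgker2 : gker (2*M+5-2) lam r
      = (resC (2*M+5-2) : ℂ) / (r:ℂ)^(2*M+1) *
        (Complex.exp (Complex.I * (lam:ℂ) * (r:ℂ)) * Q lam) := by
    unfold gker
    have e1 : 2*M+5-2-3 = 2*M := by omega
    have e2 : (2*M)/2 = M := by omega
    have e3 : 2*M+5-2-2 = 2*M+1 := by omega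
    rw [e1, e2, e3, hQ]
    have hsum : ∑ k ∈ Finset.range (M+1),
        ((Nat.factorial (2*M - k) : ℂ) /
          ((Nat.factorial k : ℂ) * (Nat.factorial (M - k) : ℂ))) *
          ((-2) * Complex.I * (r:ℂ) * (lam:ℂ)) ^ k
        = ∑ k ∈ Finset.range (M+1), Bc' (M+1) k * c^k * (lam:ℂ)^k := by
      refine Finset.sum_congr rfl (fun k hk => ?_)
      unfold Bc'
      have e4 : 2*(M+1) - 2 - k = 2*M - k := by omega
      have e5 : M+1-1-k = M - k := by omega
      rw [e4, e5, hc, mul_pow]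
      ring
    rw [hsum]
    ring
  -- derivative
  have hPderiv : HasDerivAt P S' lam := by
    rw [hP, hS']
    apply HasDerivAt.fun_sum
    intro l hl
    exact (hasDerivAt_pow l (lam:ℂ)).const_mul (Bc (M+1) l * c^l)
  have hexp : HasDerivAt (fun z : ℂ => Complex.exp (Complex.I * z * (r:ℂ)))
      (Complex.exp (Complex.I * (lam:ℂ) * (r:ℂ)) * (Complex.I * (r:ℂ))) (lam:ℂ) := by
    have h : HasDerivAt (fun z : ℂ => Complex.I * z * (r:ℂ)) (Complex.I * (r:ℂ)) (lam:ℂ) := by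
      simpa using ((hasDerivAt_id ((lam:ℂ))).const_mul Complex.I).mul_const (r:ℂ)
    exact h.cexp
  have hF : HasDerivAt (fun z : ℂ => A * (Complex.exp (Complex.I * z * (r:ℂ)) * P z))
      (A * (Complex.exp (Complex.I * (lam:ℂ) * (r:ℂ)) * (Complex.I * (r:ℂ)) * P lam
        + Complex.exp (Complex.I * (lam:ℂ) * (r:ℂ)) * S')) (lam:ℂ) :=
    (hexp.mul hPderiv).const_mul A
  have hd : deriv (fun t : ℝ => gker (2*M+5) t r) lam
      = A * (Complex.exp (Complex.I * (lam:ℂ) * (r:ℂ)) * (Complex.I * (r:ℂ)) * P lam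
        + Complex.exp (Complex.I * (lam:ℂ) * (r:ℂ)) * S') := by
    have heq : (fun t : ℝ => gker (2*M+5) t r)
        = fun t : ℝ => A * (Complex.exp (Complex.I * (t:ℂ) * (r:ℂ)) * P t) :=
      funext fun t => hgker t
    rw [heq]
    exact hF.comp_ofReal.deriv
  -- key identity
  have hkey := key_sum M (r:ℂ) (lam:ℂ) c hc
  have hT : ∑ k ∈ Finset.range (M+1), 2*(r:ℂ)^2 * Bc' (M+1) k * c^k * (lam:ℂ)^k
      = 2*(r:ℂ)^2 * Q lam := by
    rw [hQ, Finset.mul_sum]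
    exact Finset.sum_congr rfl (fun k hk => by ring)
  rw [hT] at hkey
  -- conclude
  rw [hd, hgker2]
  have hkey2 : Complex.exp (Complex.I * (lam:ℂ) * (r:ℂ)) * (Complex.I * (r:ℂ)) * P lam
      + Complex.exp (Complex.I * (lam:ℂ) * (r:ℂ)) * S'
      = Complex.exp (Complex.I * (lam:ℂ) * (r:ℂ)) * ((lam:ℂ) * (2*(r:ℂ)^2 * Q lam)) := by
    calc Complex.exp (Complex.I * (lam:ℂ) * (r:ℂ)) * (Complex.I * (r:ℂ)) * P lam
        + Complex.exp (Complex.I * (lam:ℂ) * (r:ℂ)) * S'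
        = Complex.exp (Complex.I * (lam:ℂ) * (r:ℂ)) *
            (Complex.I * (r:ℂ) * P lam + S') := by ring
      _ = _ := by
            have hPl : P (lam:ℂ) = ∑ l ∈ Finset.range (M+2), Bc (M+1) l * c^l * (lam:ℂ)^l := rfl
            rw [hPl, hS', hkey]
  rw [hkey2, hA]
  have hsR : (2 * resC (2*M+5) / resC (2*M+5-2)) * resC (2*M+5-2) = 2 * resC (2*M+5) :=
    div_mul_cancel₀ _ (ne_of_gt hC'pos)
  have hs : ((2 * resC (2*M+5) / resC (2*M+5-2) : ℝ) : ℂ) * (resC (2*M+5-2):ℂ)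
      = 2 * (resC (2*M+5) : ℂ) := by exact_mod_cast hsR
  have hr2 : (r:ℂ)^(2*M+3) = (r:ℂ)^(2*M+1) * (r:ℂ)^2 := by ring
  have hrp : (r:ℂ)^(2*M+1) ≠ 0 := pow_ne_zero _ hr
  rw [hr2]
  push_cast
  exact final_alg (lam:ℂ) (resC (2*M+5) : ℂ) (resC (2*M+5-2) : ℂ)
    (Complex.exp (Complex.I * (lam:ℂ) * (r:ℂ))) (Q lam) ((r:ℂ)^(2*M+1)) ((r:ℂ)^2)
    hlam hC' hrp (pow_ne_zero 2 hr)
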